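/- If 𝒞 is a finite cover of the space KE consisting of closed sets, then the set X(𝒞) = ⋃_{C∈𝒞} {x ∈ [0,1] : for every s ∈ 𝕊, the point ⟨x,s⟩ of Y belongs to C} is comeager in [0,1]. -/

import Mathlib

open TopologicalSpace

/-- The unit interval `[0,1]` as a linearly ordered set. -/
abbrev UnitInt : Type := ↥(Set.Icc (0 : ℝ) 1)

/-- The split interval `𝕊 = ((0,1] × {0}) ∪ ([0,1) × {1})` with the lexicographic order
(a point `⟨x, false⟩` is `x⁻` and `⟨x, true⟩` is `x⁺`). -/
abbrev SplitInt : Type :=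
  {q : Lex (ℝ × Bool) //
    ((ofLex q).2 = false ∧ (ofLex q).1 ∈ Set.Ioc (0 : ℝ) 1) ∨
    ((ofLex q).2 = true ∧ (ofLex q).1 ∈ Set.Ico (0 : ℝ) 1)}

/-- `Y = [0,1] ×_lex 𝕊`, the lexicographic product of `[0,1]` and the split interval. -/
abbrev YE : Type := Lex (UnitInt × SplitInt)

/-- `X = [0,1] × (0,1] ⊆ ℝ²`, with its Euclidean (subspace) topology. -/
abbrev XE : Type := {p : ℝ × ℝ // p.1 ∈ Set.Icc (0 : ℝ) 1 ∧ p.2 ∈ Set.Ioc (0 : ℝ) 1}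

/-- The underlying set of `KE` is the disjoint union `X ⊔ Y`. -/
abbrev KE : Type := XE ⊕ YE

/-- `U_n(z,a,b)` : the intersection with `X` of the open "polar rectangle"
`{⟨z + r·cos(π − πt), r·sin(π − πt)⟩ : 0 < r < 1/n, a < t < b}`. -/
noncomputable def Uset (n : ℕ) (z a b : ℝ) : Set XE :=
  {p | ∃ r t : ℝ, 0 < r ∧ r < 1 / (n : ℝ) ∧ a < t ∧ t < b ∧
    (p : ℝ × ℝ).1 = z + r * Real.cos (Real.pi - Real.pi * t) ∧
    (p : ℝ × ℝ).2 = r * Real.sin (Real.pi - Real.pi * t)}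

/-- The canonical (order-preserving) coordinate map of `Y` into `ℝ ×_lex (ℝ ×_lex Bool)`. -/
def cY (w : YE) : Lex (ℝ × Lex (ℝ × Bool)) :=
  toLex ((((ofLex w).1 : ℝ)), ((ofLex w).2 : Lex (ℝ × Bool)))

/-- A triple of coordinates, as a point of `ℝ ×_lex (ℝ ×_lex Bool)`. -/
def pt (x y : ℝ) (b : Bool) : Lex (ℝ × Lex (ℝ × Bool)) :=
  toLex (x, toLex (y, b))

/-- `I(α,β)` : the set of points of `Y` lying strictly between `α` and `β`
(in the lexicographic order, read off through the coordinates). -/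
def Iset (α β : Lex (ℝ × Lex (ℝ × Bool))) : Set YE :=
  {w | α < cY w ∧ cY w < β}

/-- The basic neighborhoods of points of `KE`:  a point of `X` has its usual Euclidean
neighborhoods taken inside `X`; a point `⟨x, y⁻⟩` of `Y` with `y ≠ 1` has neighborhoods
`U_n(x,a,y) ∪ I(⟨x,a⁻⟩, ⟨x,y⁺⟩)` for `0 < a < y`, `n ≥ 1`; a point `⟨x, y⁺⟩` with
`y ≠ 0` has neighborhoods `U_n(x,y,b) ∪ I(⟨x,y⁻⟩, ⟨x,b⁺⟩)` for `y < b < 1`, `n ≥ 1`;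
a point `⟨x, 0⁺⟩` has neighborhoods `U_n(x,0,b) ∪ I(⟨x−1/n,(1/2)⁻⟩, ⟨x,b⁺⟩)` for
`0 < b < 1`, `n ≥ 1`; and a point `⟨x, 1⁻⟩` has neighborhoods
`U_n(x,a,1) ∪ I(⟨x,a⁻⟩, ⟨x+1/n,(1/2)⁺⟩)` for `0 < a < 1`, `n ≥ 1`. -/
noncomputable def IsBasicNhd (p : KE) (B : Set KE) : Prop :=
  (∃ q : XE, p = Sum.inl q ∧ ∃ V : Set XE, IsOpen V ∧ q ∈ V ∧ B = Sum.inl '' V) ∨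
  (∃ w : YE, p = Sum.inr w ∧
    (let x : ℝ := ((ofLex w).1 : ℝ)
     let yr : ℝ := (ofLex ((ofLex w).2 : Lex (ℝ × Bool))).1
     let bb : Bool := (ofLex ((ofLex w).2 : Lex (ℝ × Bool))).2
     (bb = false ∧ yr ≠ 1 ∧ ∃ n : ℕ, 1 ≤ n ∧ ∃ a : ℝ, 0 < a ∧ a < yr ∧
        B = Sum.inl '' Uset n x a yr ∪ Sum.inr '' Iset (pt x a false) (pt x yr true)) ∨
     (bb = true ∧ yr ≠ 0 ∧ ∃ n : ℕ, 1 ≤ n ∧ ∃ b : ℝ, yr < b ∧ b < 1 ∧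
        B = Sum.inl '' Uset n x yr b ∪ Sum.inr '' Iset (pt x yr false) (pt x b true)) ∨
     (bb = true ∧ yr = 0 ∧ ∃ n : ℕ, 1 ≤ n ∧ ∃ b : ℝ, 0 < b ∧ b < 1 ∧
        B = Sum.inl '' Uset n x 0 b ∪
          Sum.inr '' Iset (pt (x - 1 / (n : ℝ)) (1 / 2) false) (pt x b true)) ∨
     (bb = false ∧ yr = 1 ∧ ∃ n : ℕ, 1 ≤ n ∧ ∃ a : ℝ, 0 < a ∧ a < 1 ∧
        B = Sum.inl '' Uset n x a 1 ∪
          Sum.inr '' Iset (pt x a false) (pt (x + 1 / (n : ℝ)) (1 / 2) true))))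

/-- The neighborhood filter of a point of `KE`, generated by its basic neighborhoods. -/
noncomputable def nhdKE (p : KE) : Filter KE :=
  ⨅ B ∈ {B : Set KE | IsBasicNhd p B}, Filter.principal B

/-- The topology on `KE` determined by the above neighborhood system: a set is open iff
it belongs to the neighborhood filter of each of its points. -/
noncomputable instance : TopologicalSpace KE :=
  TopologicalSpace.mkOfNhds nhdKE


lemma aux_sin_pos_iff {d : ℝ} (h1 : -1 < d) (h2 : d < 1) :
    0 < Real.sin (Real.pi * d) ↔ 0 < d := by
  constructor
  · intro h
    by_contra hd
    push_neg at hd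
    have : Real.sin (Real.pi * d) ≤ 0 :=
      Real.sin_nonpos_of_nonpos_of_neg_pi_le
        (mul_nonpos_of_nonneg_of_nonpos Real.pi_pos.le hd)
        (by nlinarith [Real.pi_pos])
    linarith
  · intro h
    exact Real.sin_pos_of_pos_of_lt_pi (by positivity) (by nlinarith [Real.pi_pos])

lemma aux_sin_neg_iff {d : ℝ} (h1 : -1 < d) (h2 : d < 1) :
    Real.sin (Real.pi * d) < 0 ↔ d < 0 := by
  have h := aux_sin_pos_iff (d := -d) (by linarith) (by linarith)
  rw [mul_neg, Real.sin_neg, neg_pos, neg_pos] at h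
  exact h

lemma angle_sum {r s t : ℝ} :
    r * Real.cos (Real.pi - Real.pi * t) * Real.sin (Real.pi * s)
      + Real.cos (Real.pi * s) * (r * Real.sin (Real.pi - Real.pi * t))
      = r * Real.sin (Real.pi * (t - s)) := by
  have e1 : Real.pi * s + (Real.pi - Real.pi * t) = Real.pi - Real.pi * (t - s) := by ring
  rw [show Real.sin (Real.pi * (t-s)) = Real.sin (Real.pi - Real.pi * (t-s)) from
    (Real.sin_pi_sub _).symm, ← e1, Real.sin_add]
  ring

lemma angle_key_lower {r s t : ℝ} (hr : 0 < r) (hs0 : 0 < s) (hs1 : s < 1)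
    (ht0 : 0 < t) (ht1 : t < 1) :
    (-Real.cos (Real.pi * s) * (r * Real.sin (Real.pi - Real.pi * t)) <
      (r * Real.cos (Real.pi - Real.pi * t)) * Real.sin (Real.pi * s)) ↔ s < t := by
  have h := angle_sum (r := r) (s := s) (t := t)
  constructor
  · intro hlt
    have h3 : 0 < Real.sin (Real.pi * (t - s)) := by
      have h2 : 0 < r * Real.sin (Real.pi * (t - s)) := by nlinarith
      by_contra hc
      push_neg at hc
      nlinarith
    have := (aux_sin_pos_iff (by linarith) (by linarith)).1 h3
    linarith
  · intro hlt
    have h3 : 0 < Real.sin (Real.pi * (t - s)) :=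
      (aux_sin_pos_iff (by linarith) (by linarith)).2 (by linarith)
    nlinarith

lemma angle_key_upper {r s t : ℝ} (hr : 0 < r) (hs0 : 0 < s) (hs1 : s < 1)
    (ht0 : 0 < t) (ht1 : t < 1) :
    ((r * Real.cos (Real.pi - Real.pi * t)) * Real.sin (Real.pi * s) <
      -Real.cos (Real.pi * s) * (r * Real.sin (Real.pi - Real.pi * t))) ↔ t < s := by
  have h := angle_sum (r := r) (s := s) (t := t)
  constructor
  · intro hlt
    have h3 : Real.sin (Real.pi * (t - s)) < 0 := by nlinarith
    have := (aux_sin_neg_iff (by linarith) (by linarith)).1 h3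
    linarith
  · intro hlt
    have h3 : Real.sin (Real.pi * (t - s)) < 0 :=
      (aux_sin_neg_iff (by linarith) (by linarith)).2 (by linarith)
    nlinarith


/-- The "wedge" condition in closed algebraic form. -/
def Wpred (n : ℕ) (z a b : ℝ) (p : XE) : Prop :=
  ((p : ℝ × ℝ).1 - z) ^ 2 + ((p : ℝ × ℝ).2) ^ 2 < (1 / (n : ℝ)) ^ 2 ∧
  -Real.cos (Real.pi * a) * (p : ℝ × ℝ).2 < ((p : ℝ × ℝ).1 - z) * Real.sin (Real.pi * a) ∧
  ((p : ℝ × ℝ).1 - z) * Real.sin (Real.pi * b) < -Real.cos (Real.pi * b) * (p : ℝ × ℝ).2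

lemma polar_exists {u v R : ℝ} (hv : 0 < v) (hR : u ^ 2 + v ^ 2 < R ^ 2) (hR0 : 0 ≤ R) :
    ∃ r t : ℝ, 0 < r ∧ r < R ∧ 0 < t ∧ t < 1 ∧
      u = r * Real.cos (Real.pi - Real.pi * t) ∧ v = r * Real.sin (Real.pi - Real.pi * t) := by
  have hrr : (0:ℝ) < u ^ 2 + v ^ 2 := by nlinarith
  obtain ⟨r, hrdef⟩ : ∃ r : ℝ, r = Real.sqrt (u ^ 2 + v ^ 2) := ⟨_, rfl⟩
  have hr0 : 0 < r := hrdef ▸ Real.sqrt_pos.2 hrr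
  have hrne : r ≠ 0 := hr0.ne'
  have hr2 : r ^ 2 = u ^ 2 + v ^ 2 := hrdef ▸ Real.sq_sqrt hrr.le
  have hrn : r < R := by
    have h1 : r < Real.sqrt (R ^ 2) := hrdef ▸ Real.sqrt_lt_sqrt hrr.le hR
    rwa [Real.sqrt_sq hR0] at h1
  have hu_lt : u < r := by nlinarith
  have hu_gt : -r < u := by nlinarith
  have hdiv1 : -1 ≤ u / r := by rw [le_div_iff₀ hr0]; linarith
  have hdiv2 : u / r ≤ 1 := by rw [div_le_one hr0]; linarith
  obtain ⟨θ, hθdef⟩ : ∃ θ : ℝ, θ = Real.arccos (u / r) := ⟨_, rfl⟩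
  have hcos : Real.cos θ = u / r := hθdef ▸ Real.cos_arccos hdiv1 hdiv2
  have hsin : Real.sin θ = v / r := by
    rw [hθdef, Real.sin_arccos]
    have h2 : 1 - (u / r) ^ 2 = (v / r) ^ 2 := by
      field_simp
      nlinarith
    rw [h2, Real.sqrt_sq (by positivity)]
  have hsinpos : 0 < Real.sin θ := by rw [hsin]; positivity
  have hθ0 : 0 < θ := by
    rcases lt_or_eq_of_le (hθdef ▸ Real.arccos_nonneg (u / r)) with h | h
    · exact h
    · exfalso; rw [← h] at hsinpos; simp at hsinpos
  have hθπ : θ < Real.pi := by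
    rcases lt_or_eq_of_le (hθdef ▸ Real.arccos_le_pi (u / r)) with h | h
    · exact h
    · exfalso; rw [h] at hsinpos; simp at hsinpos
  have hπ : (0:ℝ) < Real.pi := Real.pi_pos
  refine ⟨r, 1 - θ / Real.pi, hr0, hrn, ?_, ?_, ?_, ?_⟩
  · rw [sub_pos, div_lt_one hπ]; exact hθπ
  · have h3 : 0 < θ / Real.pi := by positivity
    linarith
  · have hθeq : Real.pi - Real.pi * (1 - θ / Real.pi) = θ := by field_simp; ring
    rw [hθeq, hcos]; field_simp
  · have hθeq : Real.pi - Real.pi * (1 - θ / Real.pi) = θ := by field_simp; ring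
    rw [hθeq, hsin]; field_simp

lemma mem_Uset_iff {n : ℕ} (hn : 1 ≤ n) {z a b : ℝ} (ha : 0 < a) (hab : a < b) (hb : b < 1)
    (p : XE) : p ∈ Uset n z a b ↔ Wpred n z a b p := by
  have hv : 0 < (p : ℝ × ℝ).2 := p.2.2.1
  constructor
  · rintro ⟨r, t, hr0, hrn, hat, htb, h1, h2⟩
    have ht0 : 0 < t := ha.trans hat
    have ht1 : t < 1 := htb.trans hb
    have hu : (p : ℝ × ℝ).1 - z = r * Real.cos (Real.pi - Real.pi * t) := by rw [h1]; ring
    refine ⟨?_, ?_, ?_⟩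
    · rw [hu, h2]
      have h4 : (r * Real.cos (Real.pi - Real.pi * t)) ^ 2
          + (r * Real.sin (Real.pi - Real.pi * t)) ^ 2 = r ^ 2 := by
        have := Real.sin_sq_add_cos_sq (Real.pi - Real.pi * t)
        nlinarith
      rw [h4]
      have h0n : (0:ℝ) < 1 / (n : ℝ) := by positivity
      nlinarith
    · rw [hu, h2]
      exact (angle_key_lower hr0 ha (hab.trans hb) ht0 ht1).2 hat
    · rw [hu, h2]
      exact (angle_key_upper hr0 (ha.trans hab) hb ht0 ht1).2 htb
  · rintro ⟨hw1, hw2, hw3⟩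
    obtain ⟨r, t, hr0, hrn, ht0, ht1, hueq, hveq⟩ :=
      polar_exists (u := (p : ℝ × ℝ).1 - z) hv hw1 (by positivity)
    refine ⟨r, t, hr0, hrn, ?_, ?_, ?_, ?_⟩
    · rw [hueq, hveq] at hw2
      exact (angle_key_lower hr0 ha (hab.trans hb) ht0 ht1).1 hw2
    · rw [hueq, hveq] at hw3
      exact (angle_key_upper hr0 (ha.trans hab) hb ht0 ht1).1 hw3
    · have h5 : (p : ℝ × ℝ).1 = z + ((p : ℝ × ℝ).1 - z) := by ring
      rw [h5, hueq]
    · rw [← hveq]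

lemma Uset_mono {n n' : ℕ} (hn : 0 < n) (hnn : n ≤ n') {z a a' b b' : ℝ}
    (haa : a ≤ a') (hbb : b' ≤ b) : Uset n' z a' b' ⊆ Uset n z a b := by
  rintro p ⟨r, t, h0, h1, h2, h3, h4, h5⟩
  have hinv : 1 / (n' : ℝ) ≤ 1 / (n : ℝ) :=
    one_div_le_one_div_of_le (Nat.cast_pos.2 hn) (Nat.cast_le.2 hnn)
  exact ⟨r, t, h0, h1.trans_le hinv, lt_of_le_of_lt haa h2, h3.trans_le hbb, h4, h5⟩

lemma Iset_mono {α α' β β' : Lex (ℝ × Lex (ℝ × Bool))} (h1 : α ≤ α') (h2 : β' ≤ β) :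
    Iset α' β' ⊆ Iset α β := fun w hw => ⟨lt_of_le_of_lt h1 hw.1, lt_of_lt_of_le hw.2 h2⟩

lemma lexb_le {y y' : ℝ} {c : Bool} (h : y ≤ y') :
    (toLex (y, c) : Lex (ℝ × Bool)) ≤ toLex (y', c) := by
  rcases lt_or_eq_of_le h with h | h
  · exact le_of_lt (Prod.Lex.lt_iff.2 (Or.inl h))
  · subst h; exact le_rfl

lemma pt_le_pt_fst {x x' y : ℝ} {c : Bool} (h : x ≤ x') : pt x y c ≤ pt x' y c := by
  rcases lt_or_eq_of_le h with h | h
  · exact le_of_lt (Prod.Lex.lt_iff.2 (Or.inl h))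
  · subst h; exact le_rfl

lemma pt_le_pt_snd {x y y' : ℝ} {c : Bool} (h : y ≤ y') : pt x y c ≤ pt x y' c :=
  Prod.Lex.le_iff.2 (Or.inr ⟨rfl, lexb_le h⟩)

/-- coordinates of a point of `Y`. -/
def xY (w : YE) : ℝ := ((ofLex w).1 : ℝ)
def yY (w : YE) : ℝ := (ofLex ((ofLex w).2 : Lex (ℝ × Bool))).1
def bY (w : YE) : Bool := (ofLex ((ofLex w).2 : Lex (ℝ × Bool))).2

/-- the basic neighborhoods of a point of `Y`, spelled out. -/
def BasicY (w : YE) (B : Set KE) : Prop :=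
  (bY w = false ∧ yY w ≠ 1 ∧ ∃ n : ℕ, 1 ≤ n ∧ ∃ a : ℝ, 0 < a ∧ a < yY w ∧
     B = Sum.inl '' Uset n (xY w) a (yY w) ∪
       Sum.inr '' Iset (pt (xY w) a false) (pt (xY w) (yY w) true)) ∨
  (bY w = true ∧ yY w ≠ 0 ∧ ∃ n : ℕ, 1 ≤ n ∧ ∃ b : ℝ, yY w < b ∧ b < 1 ∧
     B = Sum.inl '' Uset n (xY w) (yY w) b ∪
       Sum.inr '' Iset (pt (xY w) (yY w) false) (pt (xY w) b true)) ∨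
  (bY w = true ∧ yY w = 0 ∧ ∃ n : ℕ, 1 ≤ n ∧ ∃ b : ℝ, 0 < b ∧ b < 1 ∧
     B = Sum.inl '' Uset n (xY w) 0 b ∪
       Sum.inr '' Iset (pt (xY w - 1 / (n : ℝ)) (1 / 2) false) (pt (xY w) b true)) ∨
  (bY w = false ∧ yY w = 1 ∧ ∃ n : ℕ, 1 ≤ n ∧ ∃ a : ℝ, 0 < a ∧ a < 1 ∧
     B = Sum.inl '' Uset n (xY w) a 1 ∪
       Sum.inr '' Iset (pt (xY w) a false) (pt (xY w + 1 / (n : ℝ)) (1 / 2) true))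

lemma isBasicNhd_inr {w : YE} {B : Set KE} :
    IsBasicNhd (Sum.inr w) B ↔ BasicY w B := by
  constructor
  · rintro (⟨q, hq, -⟩ | ⟨w', hw', h⟩)
    · exact absurd hq (by simp)
    · obtain rfl : w = w' := by injection hw'
      exact h
  · intro h
    exact Or.inr ⟨w, rfl, h⟩

lemma isBasicNhd_inl {q : XE} {B : Set KE} :
    IsBasicNhd (Sum.inl q) B ↔ ∃ V : Set XE, IsOpen V ∧ q ∈ V ∧ B = Sum.inl '' V := by
  constructor
  · rintro (⟨q', hq', h⟩ | ⟨w', hw', -⟩)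
    · obtain rfl : q = q' := by injection hq'
      exact h
    · exact absurd hw' (by simp)
  · intro h
    exact Or.inl ⟨q, rfl, h⟩

lemma basicY_nonempty (w : YE) : ∃ B, BasicY w B := by
  rcases ((ofLex w).2).2 with ⟨hb, hy⟩ | ⟨hb, hy⟩
  · by_cases h1 : yY w = 1
    · exact ⟨_, Or.inr (Or.inr (Or.inr ⟨hb, h1, 1, le_rfl, 1/2, by norm_num, by norm_num, rfl⟩))⟩
    · refine ⟨_, Or.inl ⟨hb, h1, 1, le_rfl, yY w / 2, ?_, ?_, rfl⟩⟩
      · have : 0 < yY w := hy.1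
        linarith
      · have : 0 < yY w := hy.1
        linarith
  · by_cases h0 : yY w = 0
    · exact ⟨_, Or.inr (Or.inr (Or.inl ⟨hb, h0, 1, le_rfl, 1/2, by norm_num, by norm_num, rfl⟩))⟩
    · refine ⟨_, Or.inr (Or.inl ⟨hb, h0, 1, le_rfl, (yY w + 1) / 2, ?_, ?_, rfl⟩)⟩
      · have : yY w < 1 := hy.2
        linarith
      · have : yY w < 1 := hy.2
        linarith

lemma basic_nonempty (p : KE) : ∃ B, IsBasicNhd p B := by
  cases p with
  | inl q => exact ⟨_, isBasicNhd_inl.2 ⟨Set.univ, isOpen_univ, trivial, rfl⟩⟩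
  | inr w =>
    obtain ⟨B, hB⟩ := basicY_nonempty w
    exact ⟨B, isBasicNhd_inr.2 hB⟩

lemma basic_directed {p : KE} {B₁ B₂ : Set KE} (h₁ : IsBasicNhd p B₁) (h₂ : IsBasicNhd p B₂) :
    ∃ B₃, IsBasicNhd p B₃ ∧ B₃ ⊆ B₁ ∧ B₃ ⊆ B₂ := by
  cases p with
  | inl q =>
    obtain ⟨V₁, hV₁, hq₁, rfl⟩ := isBasicNhd_inl.1 h₁
    obtain ⟨V₂, hV₂, hq₂, rfl⟩ := isBasicNhd_inl.1 h₂
    exact ⟨Sum.inl '' (V₁ ∩ V₂), isBasicNhd_inl.2 ⟨V₁ ∩ V₂, hV₁.inter hV₂, ⟨hq₁, hq₂⟩, rfl⟩,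
      Set.image_mono Set.inter_subset_left, Set.image_mono Set.inter_subset_right⟩
  | inr w =>
    rw [isBasicNhd_inr] at h₁ h₂
    rcases h₁ with ⟨hb₁, hy₁, n₁, hn₁, a₁, ha₁, ha₁', rfl⟩ |
        ⟨hb₁, hy₁, n₁, hn₁, b₁, hb₁', hb₁'', rfl⟩ |
        ⟨hb₁, hy₁, n₁, hn₁, b₁, hb₁', hb₁'', rfl⟩ |
        ⟨hb₁, hy₁, n₁, hn₁, a₁, ha₁, ha₁', rfl⟩ <;>
      rcases h₂ with ⟨hb₂, hy₂, n₂, hn₂, a₂, ha₂, ha₂', rfl⟩ |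
        ⟨hb₂, hy₂, n₂, hn₂, b₂, hb₂', hb₂'', rfl⟩ |
        ⟨hb₂, hy₂, n₂, hn₂, b₂, hb₂', hb₂'', rfl⟩ |
        ⟨hb₂, hy₂, n₂, hn₂, a₂, ha₂, ha₂', rfl⟩ <;>
      first
        | (exfalso; simp [hb₁] at hb₂; done)
        | (exfalso; exact hy₁ hy₂)
        | (exfalso; exact hy₂ hy₁)
        | skip
  ---- four diagonal cases remain
    · refine ⟨_, isBasicNhd_inr.2 (Or.inl ⟨hb₁, hy₁, max n₁ n₂, hn₁.trans (le_max_left _ _),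
        max a₁ a₂, lt_of_lt_of_le ha₁ (le_max_left _ _), max_lt ha₁' ha₂', rfl⟩), ?_, ?_⟩
      · exact Set.union_subset_union
          (Set.image_mono (Uset_mono hn₁ (le_max_left _ _) (le_max_left _ _) le_rfl))
          (Set.image_mono (Iset_mono (pt_le_pt_snd (le_max_left _ _)) le_rfl))
      · exact Set.union_subset_union
          (Set.image_mono (Uset_mono hn₂ (le_max_right _ _) (le_max_right _ _) le_rfl))
          (Set.image_mono (Iset_mono (pt_le_pt_snd (le_max_right _ _)) le_rfl))
    · refine ⟨_, isBasicNhd_inr.2 (Or.inr (Or.inl ⟨hb₁, hy₁, max n₁ n₂,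
        hn₁.trans (le_max_left _ _), min b₁ b₂, lt_min hb₁' hb₂',
        (min_le_left _ _).trans_lt hb₁'', rfl⟩)), ?_, ?_⟩
      · exact Set.union_subset_union
          (Set.image_mono (Uset_mono hn₁ (le_max_left _ _) le_rfl (min_le_left _ _)))
          (Set.image_mono (Iset_mono le_rfl (pt_le_pt_snd (min_le_left _ _))))
      · exact Set.union_subset_union
          (Set.image_mono (Uset_mono hn₂ (le_max_right _ _) le_rfl (min_le_right _ _)))
          (Set.image_mono (Iset_mono le_rfl (pt_le_pt_snd (min_le_right _ _))))
    · have hinv₁ : 1 / ((max n₁ n₂ : ℕ) : ℝ) ≤ 1 / (n₁ : ℝ) :=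
        one_div_le_one_div_of_le (Nat.cast_pos.2 hn₁) (Nat.cast_le.2 (le_max_left _ _))
      have hinv₂ : 1 / ((max n₁ n₂ : ℕ) : ℝ) ≤ 1 / (n₂ : ℝ) :=
        one_div_le_one_div_of_le (Nat.cast_pos.2 hn₂) (Nat.cast_le.2 (le_max_right _ _))
      refine ⟨_, isBasicNhd_inr.2 (Or.inr (Or.inr (Or.inl ⟨hb₁, hy₁, max n₁ n₂,
        hn₁.trans (le_max_left _ _), min b₁ b₂, lt_min hb₁' hb₂',
        (min_le_left _ _).trans_lt hb₁'', rfl⟩))), ?_, ?_⟩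
      · exact Set.union_subset_union
          (Set.image_mono (Uset_mono hn₁ (le_max_left _ _) le_rfl (min_le_left _ _)))
          (Set.image_mono (Iset_mono (pt_le_pt_fst (by linarith)) (pt_le_pt_snd (min_le_left _ _))))
      · exact Set.union_subset_union
          (Set.image_mono (Uset_mono hn₂ (le_max_right _ _) le_rfl (min_le_right _ _)))
          (Set.image_mono (Iset_mono (pt_le_pt_fst (by linarith)) (pt_le_pt_snd (min_le_right _ _))))
    · have hinv₁ : 1 / ((max n₁ n₂ : ℕ) : ℝ) ≤ 1 / (n₁ : ℝ) :=
        one_div_le_one_div_of_le (Nat.cast_pos.2 hn₁) (Nat.cast_le.2 (le_max_left _ _))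
      have hinv₂ : 1 / ((max n₁ n₂ : ℕ) : ℝ) ≤ 1 / (n₂ : ℝ) :=
        one_div_le_one_div_of_le (Nat.cast_pos.2 hn₂) (Nat.cast_le.2 (le_max_right _ _))
      refine ⟨_, isBasicNhd_inr.2 (Or.inr (Or.inr (Or.inr ⟨hb₁, hy₁, max n₁ n₂,
        hn₁.trans (le_max_left _ _), max a₁ a₂, lt_of_lt_of_le ha₁ (le_max_left _ _),
        max_lt ha₁' ha₂', rfl⟩))), ?_, ?_⟩
      · exact Set.union_subset_union
          (Set.image_mono (Uset_mono hn₁ (le_max_left _ _) (le_max_left _ _) le_rfl))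
          (Set.image_mono (Iset_mono (pt_le_pt_snd (le_max_left _ _)) (pt_le_pt_fst (by linarith))))
      · exact Set.union_subset_union
          (Set.image_mono (Uset_mono hn₂ (le_max_right _ _) (le_max_right _ _) le_rfl))
          (Set.image_mono (Iset_mono (pt_le_pt_snd (le_max_right _ _)) (pt_le_pt_fst (by linarith))))

lemma mem_nhdKE_iff {p : KE} {O : Set KE} :
    O ∈ nhdKE p ↔ ∃ B, IsBasicNhd p B ∧ B ⊆ O := by
  rw [nhdKE, Filter.mem_biInf_of_directed]
  · simp only [Set.mem_setOf_eq, Filter.mem_principal]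
  · rintro B₁ hB₁ B₂ hB₂
    obtain ⟨B₃, h₃, h₁, h₂⟩ := basic_directed hB₁ hB₂
    exact ⟨B₃, h₃, Filter.principal_mono.2 h₁, Filter.principal_mono.2 h₂⟩
  · exact basic_nonempty p

lemma exists_basic_subset_of_isOpen {O : Set KE} (hO : IsOpen O) {p : KE} (hp : p ∈ O) :
    ∃ B, IsBasicNhd p B ∧ B ⊆ O := by
  have h : ∀ a ∈ O, O ∈ nhdKE a := hO
  exact mem_nhdKE_iff.1 (h p hp)

lemma exists_wedge {C : Set KE} (hC : IsClosed C) {x : UnitInt} {s : SplitInt}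
    (h : (Sum.inr (toLex (x, s)) : KE) ∉ C) :
    ∃ n : ℕ, 1 ≤ n ∧ ∃ a b : ℝ, 0 ≤ a ∧ a < b ∧ b ≤ 1 ∧
      ∀ p ∈ Uset n (x : ℝ) a b, (Sum.inl p : KE) ∉ C := by
  obtain ⟨B, hB, hBO⟩ := exists_basic_subset_of_isOpen hC.isOpen_compl h
  rw [isBasicNhd_inr] at hB
  set w : YE := toLex (x, s) with hw
  have hxw : xY w = (x : ℝ) := rfl
  have hprop := s.2
  rcases hB with ⟨hb, hy, n, hn, a, ha, ha', rfl⟩ |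
      ⟨hb, hy, n, hn, b, hb', hb'', rfl⟩ |
      ⟨hb, hy, n, hn, b, hb', hb'', rfl⟩ |
      ⟨hb, hy, n, hn, a, ha, ha', rfl⟩
  · -- type 1 : wedge (a, yY w), need yY w ≤ 1
    have hy1 : yY w ≤ 1 := by
      rcases hprop with ⟨-, hIoc⟩ | ⟨hbt, -⟩
      · exact hIoc.2
      · exact absurd (hb.symm.trans hbt) (by simp)
    refine ⟨n, hn, a, yY w, ha.le, ha', hy1, fun p hp => ?_⟩
    intro hpC
    exact (hBO (Or.inl ⟨p, hp, rfl⟩)) hpC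
  · -- type 2 : wedge (yY w, b), need 0 ≤ yY w
    have hy0 : 0 ≤ yY w := by
      rcases hprop with ⟨hbf, -⟩ | ⟨-, hIco⟩
      · exact absurd (hb.symm.trans hbf) (by simp)
      · exact hIco.1
    refine ⟨n, hn, yY w, b, hy0, hb', hb''.le, fun p hp => ?_⟩
    intro hpC
    exact (hBO (Or.inl ⟨p, hp, rfl⟩)) hpC
  · -- type 3 : wedge (0, b)
    refine ⟨n, hn, 0, b, le_rfl, hb', hb''.le, fun p hp => ?_⟩
    intro hpC
    exact (hBO (Or.inl ⟨p, hp, rfl⟩)) hpC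
  · -- type 4 : wedge (a, 1)
    refine ⟨n, hn, a, 1, ha.le, ha', le_rfl, fun p hp => ?_⟩
    intro hpC
    exact (hBO (Or.inl ⟨p, hp, rfl⟩)) hpC

lemma exists_good_wedge {C : Set KE} (hC : IsClosed C) {x : UnitInt} {s : SplitInt}
    (h : (Sum.inr (toLex (x, s)) : KE) ∉ C) :
    ∃ n : ℕ, 1 ≤ n ∧ ∃ a b : ℚ, 0 < a ∧ a < b ∧ b < 1 ∧
      ∀ p ∈ Uset n (x : ℝ) (a : ℝ) (b : ℝ), (Sum.inl p : KE) ∉ C := by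
  obtain ⟨n, hn, a, b, ha0, hab, hb1, hdis⟩ := exists_wedge hC h
  obtain ⟨q₁, hq₁, hq₁'⟩ := exists_rat_btwn (show a < (a + b) / 2 by linarith)
  obtain ⟨q₂, hq₂, hq₂'⟩ := exists_rat_btwn (show ((a + b) / 2 : ℝ) < b by linarith)
  refine ⟨n, hn, q₁, q₂, ?_, ?_, ?_, fun p hp => ?_⟩
  · exact_mod_cast lt_of_le_of_lt ha0 hq₁
  · exact_mod_cast hq₁'.trans hq₂
  · exact_mod_cast lt_of_lt_of_le hq₂' hb1
  · exact hdis p (Uset_mono hn le_rfl (le_of_lt hq₁) (le_of_lt hq₂') hp)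

/-- index of good wedge parameters -/
abbrev Idx : Type := {q : ℕ × ℚ × ℚ // 1 ≤ q.1 ∧ 0 < q.2.1 ∧ q.2.1 < q.2.2 ∧ q.2.2 < 1}

/-- the (closed) set of `x` such that the wedge `U_{i}(x)` misses `C`. -/
def Eset (C : Set KE) (i : Idx) : Set UnitInt :=
  {x | ∀ p : XE, Wpred i.1.1 (x : ℝ) (i.1.2.1 : ℝ) (i.1.2.2 : ℝ) p → (Sum.inl p : KE) ∉ C}

lemma isOpen_W (n : ℕ) (a b : ℝ) (p : XE) :
    IsOpen {x : UnitInt | Wpred n (x : ℝ) a b p} := by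
  have hc : Continuous fun x : UnitInt => (p : ℝ × ℝ).1 - (x : ℝ) :=
    continuous_const.sub continuous_subtype_val
  have h1 : IsOpen {x : UnitInt |
      ((p : ℝ × ℝ).1 - (x : ℝ)) ^ 2 + ((p : ℝ × ℝ).2) ^ 2 < (1 / (n : ℝ)) ^ 2} :=
    isOpen_lt ((hc.pow 2).add continuous_const) continuous_const
  have h2 : IsOpen {x : UnitInt |
      -Real.cos (Real.pi * a) * (p : ℝ × ℝ).2 < ((p : ℝ × ℝ).1 - (x : ℝ)) * Real.sin (Real.pi * a)} :=
    isOpen_lt continuous_const (hc.mul continuous_const)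
  have h3 : IsOpen {x : UnitInt |
      ((p : ℝ × ℝ).1 - (x : ℝ)) * Real.sin (Real.pi * b) < -Real.cos (Real.pi * b) * (p : ℝ × ℝ).2} :=
    isOpen_lt (hc.mul continuous_const) continuous_const
  have : {x : UnitInt | Wpred n (x : ℝ) a b p} =
      {x : UnitInt | ((p : ℝ × ℝ).1 - (x : ℝ)) ^ 2 + ((p : ℝ × ℝ).2) ^ 2 < (1 / (n : ℝ)) ^ 2} ∩
      ({x : UnitInt | -Real.cos (Real.pi * a) * (p : ℝ × ℝ).2 <
          ((p : ℝ × ℝ).1 - (x : ℝ)) * Real.sin (Real.pi * a)} ∩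
       {x : UnitInt | ((p : ℝ × ℝ).1 - (x : ℝ)) * Real.sin (Real.pi * b) <
          -Real.cos (Real.pi * b) * (p : ℝ × ℝ).2}) := rfl
  rw [this]
  exact h1.inter (h2.inter h3)

lemma isClosed_Eset (C : Set KE) (i : Idx) : IsClosed (Eset C i) := by
  rw [← isOpen_compl_iff]
  have : (Eset C i)ᶜ = ⋃ p : XE,
      {x : UnitInt | (Sum.inl p : KE) ∈ C} ∩
        {x : UnitInt | Wpred i.1.1 (x : ℝ) (i.1.2.1 : ℝ) (i.1.2.2 : ℝ) p} := by
    ext x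
    simp only [Eset, Set.mem_compl_iff, Set.mem_setOf_eq, Set.mem_iUnion, Set.mem_inter_iff]
    push_neg
    tauto
  rw [this]
  refine isOpen_iUnion fun p => ?_
  by_cases hp : (Sum.inl p : KE) ∈ C
  · have : {x : UnitInt | (Sum.inl p : KE) ∈ C} = Set.univ := by
      ext; simp [hp]
    rw [this, Set.univ_inter]
    exact isOpen_W _ _ _ p
  · have : {x : UnitInt | (Sum.inl p : KE) ∈ C} = ∅ := by
      ext; simp [hp]
    rw [this, Set.empty_inter]
    exact isOpen_empty

lemma interior_iInter_empty (𝒞 : Finset (Set KE))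
    (hcover : (⋃ C ∈ 𝒞, C) = Set.univ) (f : {C // C ∈ 𝒞} → Idx) :
    interior (⋂ C : {C // C ∈ 𝒞}, Eset C.1 (f C)) = ∅ := by
  by_contra hne
  obtain ⟨x₀, hx₀⟩ := Set.nonempty_iff_ne_empty.2 hne
  obtain ⟨ε, hε, hball⟩ := Metric.mem_nhds_iff.1 (mem_interior_iff_mem_nhds.1 hx₀)
  have hx₀0 : (0:ℝ) ≤ (x₀ : ℝ) := x₀.2.1
  have hx₀1 : (x₀:ℝ) ≤ 1 := x₀.2.2
  set u : ℝ := max 0 ((x₀ : ℝ) - ε / 2) with hudef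
  set v : ℝ := min 1 ((x₀ : ℝ) + ε / 2) with hvdef
  have huv : u < v := by
    apply max_lt
    · exact lt_min (by norm_num) (by linarith)
    · exact lt_min (by linarith) (by linarith)
  have hu0 : 0 ≤ u := le_max_left _ _
  have hv1 : v ≤ 1 := min_le_left _ _
  have hsub : ∀ x : ℝ, u ≤ x → x ≤ v → ∀ hx : x ∈ Set.Icc (0:ℝ) 1,
      (⟨x, hx⟩ : UnitInt) ∈ ⋂ C : {C // C ∈ 𝒞}, Eset C.1 (f C) := by
    intro x hux hxv hx
    apply hball
    rw [Metric.mem_ball, Subtype.dist_eq, Real.dist_eq, abs_lt]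
    have h1 : (x₀:ℝ) - ε/2 ≤ u := le_max_right _ _
    have h2 : v ≤ (x₀:ℝ) + ε/2 := min_le_right _ _
    constructor <;> linarith
  have h𝒞ne : 𝒞.Nonempty := by
    have hmem : (Sum.inl (⟨(0, 1), by norm_num⟩ : XE) : KE) ∈ ⋃ C ∈ 𝒞, C := by
      rw [hcover]; exact Set.mem_univ _
    obtain ⟨C, hC, -⟩ := Set.mem_iUnion₂.1 hmem
    exact ⟨C, hC⟩
  set z : ℝ := (u + v) / 2 with hzdef
  set tC : {C // C ∈ 𝒞} → ℝ := fun C => (((f C).1.2.1 : ℝ) + ((f C).1.2.2 : ℝ)) / 2 with htCdef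
  have htC : ∀ C, 0 < tC C ∧ tC C < 1 := by
    intro C
    obtain ⟨-, h1, h2, h3⟩ := (f C).2
    have c1 : (0:ℝ) < ((f C).1.2.1 : ℝ) := by exact_mod_cast h1
    have c2 : ((f C).1.2.1 : ℝ) < ((f C).1.2.2 : ℝ) := by exact_mod_cast h2
    have c3 : ((f C).1.2.2 : ℝ) < 1 := by exact_mod_cast h3
    constructor
    · simp only [htCdef]; linarith
    · simp only [htCdef]; linarith
  set sC : {C // C ∈ 𝒞} → ℝ := fun C => Real.sin (Real.pi * tC C) with hsCdef
  have hsC : ∀ C, 0 < sC C := by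
    intro C
    apply Real.sin_pos_of_pos_of_lt_pi
    · have := (htC C).1; positivity
    · have h1 := (htC C).2
      have hπ := Real.pi_pos
      nlinarith
  set εC : {C // C ∈ 𝒞} → ℝ :=
    fun C => sC C * min (1 / (2 * (((f C).1.1 : ℕ) : ℝ))) ((v - u) / 4) with hεCdef
  have hεC : ∀ C, 0 < εC C := by
    intro C
    have hn1 : 1 ≤ (f C).1.1 := (f C).2.1
    have hn0 : (0:ℝ) < (((f C).1.1 : ℕ) : ℝ) := Nat.cast_pos.2 hn1
    have := hsC C
    apply mul_pos this
    apply lt_min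
    · positivity
    · linarith
  have hattne : 𝒞.attach.Nonempty := Finset.attach_nonempty_iff.2 h𝒞ne
  set ε' : ℝ := min 1 (𝒞.attach.inf' hattne εC) with hε'def
  have hε'0 : 0 < ε' := lt_min one_pos ((Finset.lt_inf'_iff _).2 fun C _ => hεC C)
  have hε'1 : ε' ≤ 1 := min_le_left _ _
  have hz0 : (0:ℝ) ≤ z := by simp only [hzdef]; linarith
  have hz1 : z ≤ 1 := by simp only [hzdef]; linarith
  set p : XE := ⟨(z, ε'), ⟨⟨hz0, hz1⟩, hε'0, hε'1⟩⟩ with hpdef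
  have hpcov : (Sum.inl p : KE) ∈ ⋃ C ∈ 𝒞, C := by rw [hcover]; exact Set.mem_univ _
  obtain ⟨C, hC𝒞, hpC⟩ := Set.mem_iUnion₂.1 hpcov
  set Chat : {C // C ∈ 𝒞} := ⟨C, hC𝒞⟩ with hChatdef
  have hε'le : ε' ≤ εC Chat := (min_le_right _ _).trans (Finset.inf'_le _ (Finset.mem_attach _ _))
  set n : ℕ := (f Chat).1.1 with hndef
  obtain ⟨hn1, hq1, hq2, hq3⟩ := (f Chat).2
  have ha0 : (0:ℝ) < ((f Chat).1.2.1 : ℝ) := by exact_mod_cast hq1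
  have hab : ((f Chat).1.2.1 : ℝ) < ((f Chat).1.2.2 : ℝ) := by exact_mod_cast hq2
  have hb1 : ((f Chat).1.2.2 : ℝ) < 1 := by exact_mod_cast hq3
  have hn0 : (0:ℝ) < ((n : ℕ) : ℝ) := Nat.cast_pos.2 hn1
  set t : ℝ := tC Chat with htdef
  set s : ℝ := sC Chat with hsdef
  have hs : 0 < s := hsC Chat
  set r : ℝ := ε' / s with hrdef
  have hr0 : 0 < r := by positivity
  have hle1 : ε' ≤ s * (1 / (2 * (n:ℝ))) := by
    refine hε'le.trans ?_
    exact mul_le_mul_of_nonneg_left (min_le_left _ _) hs.le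
  have hle2 : ε' ≤ s * ((v - u) / 4) := by
    refine hε'le.trans ?_
    exact mul_le_mul_of_nonneg_left (min_le_right _ _) hs.le
  have hrle1 : r ≤ 1 / (2 * (n:ℝ)) := by
    rw [hrdef, div_le_iff₀ hs]
    nlinarith
  have hrle2 : r ≤ (v - u) / 4 := by
    rw [hrdef, div_le_iff₀ hs]
    nlinarith
  have hrn : r < 1 / (n:ℝ) := by
    have : 1 / (2 * (n:ℝ)) < 1 / (n:ℝ) := by
      apply one_div_lt_one_div_of_lt hn0
      linarith
    linarith
  set xC : ℝ := z + r * Real.cos (Real.pi * t) with hxCdef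
  have hcos1 : -1 ≤ Real.cos (Real.pi * t) := Real.neg_one_le_cos _
  have hcos2 : Real.cos (Real.pi * t) ≤ 1 := Real.cos_le_one _
  have hbd1 : r * Real.cos (Real.pi * t) ≤ r := by
    have := mul_le_mul_of_nonneg_left hcos2 hr0.le
    linarith
  have hbd2 : -r ≤ r * Real.cos (Real.pi * t) := by
    have := mul_le_mul_of_nonneg_left hcos1 hr0.le
    linarith
  have hxCu : u ≤ xC := by
    rw [hxCdef, hzdef]
    linarith
  have hxCv : xC ≤ v := by
    rw [hxCdef, hzdef]
    linarith
  have hxmem := hsub xC hxCu hxCv ⟨hu0.trans hxCu, hxCv.trans hv1⟩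
  have hE := Set.mem_iInter.1 hxmem Chat
  refine hE p ?_ hpC
  refine (mem_Uset_iff hn1 ha0 hab hb1 p).1 ⟨r, t, hr0, hrn, ?_, ?_, ?_, ?_⟩
  · simp only [htdef, htCdef]
    linarith
  · simp only [htdef, htCdef]
    linarith
  · show z = xC + r * Real.cos (Real.pi - Real.pi * t)
    rw [Real.cos_pi_sub, hxCdef]
    ring
  · show ε' = r * Real.sin (Real.pi - Real.pi * t)
    rw [Real.sin_pi_sub, hrdef]
    have : Real.sin (Real.pi * t) = s := rfl
    rw [this]
    field_simp

/-- If `𝒞` is a finite cover of `KE` by closed sets, then the set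
`X(𝒞) = ⋃_{C ∈ 𝒞} {x ∈ [0,1] : ∀ s ∈ 𝕊, ⟨x,s⟩ ∈ C}` is comeager in `[0,1]`. -/
theorem comeager_of_finite_closed_cover (𝒞 : Finset (Set KE))
    (hclosed : ∀ C ∈ 𝒞, IsClosed C)
    (hcover : (⋃ C ∈ 𝒞, C) = Set.univ) :
    (⋃ C ∈ 𝒞, {x : UnitInt | ∀ s : SplitInt, (Sum.inr (toLex (x, s)) : KE) ∈ C})
      ∈ residual UnitInt := by
  classical
  set G : Set UnitInt :=
    ⋃ C ∈ 𝒞, {x : UnitInt | ∀ s : SplitInt, (Sum.inr (toLex (x, s)) : KE) ∈ C} with hGdef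
  suffices h : IsMeagre Gᶜ by
    have := h
    rw [IsMeagre, compl_compl] at this
    exact this
  have key : Gᶜ ⊆ ⋃ f : {C // C ∈ 𝒞} → Idx, ⋂ C : {C // C ∈ 𝒞}, Eset C.1 (f C) := by
    intro x hx
    rw [Set.mem_compl_iff, hGdef, Set.mem_iUnion₂] at hx
    push_neg at hx
    simp only [Set.mem_setOf_eq, not_forall] at hx
    have hx' : ∀ C : {C // C ∈ 𝒞}, ∃ i : Idx, x ∈ Eset C.1 i := by
      intro C
      obtain ⟨s, hs⟩ := hx C.1 C.2
      obtain ⟨n, hn, a, b, ha, hab, hb, hdis⟩ := exists_good_wedge (hclosed C.1 C.2) hs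
      refine ⟨⟨(n, a, b), hn, ha, hab, hb⟩, fun p hw => ?_⟩
      have haR : (0:ℝ) < (a:ℝ) := by exact_mod_cast ha
      have habR : ((a:ℚ):ℝ) < ((b:ℚ):ℝ) := by exact_mod_cast hab
      have hbR : ((b:ℚ):ℝ) < 1 := by exact_mod_cast hb
      exact hdis p ((mem_Uset_iff hn haR habR hbR p).2 hw)
    choose g hg using hx'
    exact Set.mem_iUnion.2 ⟨g, Set.mem_iInter.2 hg⟩
  have hmeagre : IsMeagre (⋃ f : {C // C ∈ 𝒞} → Idx, ⋂ C : {C // C ∈ 𝒞}, Eset C.1 (f C)) := by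
    rw [IsMeagre, Set.compl_iUnion]
    refine (countable_iInter_mem).2 fun f => ?_
    apply residual_of_dense_open
    · exact (isClosed_iInter fun C => isClosed_Eset C.1 (f C)).isOpen_compl
    · rw [← interior_eq_empty_iff_dense_compl]
      exact interior_iInter_empty 𝒞 hcover f
  exact hmeagre.mono key
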